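/- arXiv:2303.14623 — 2 statements merged into one kernel-verified Lean document; each statement's English description precedes it below -/
import Mathlib

section
/- (Performance Difference Lemma, finite-horizon version) For any two nonstationary policies π and π' in a finite-horizon MDP with horizon T and reward function f, J(π', f) − J(π, f) = Σ_{t=1}^T E_{s_t ∼ ρ_{π'}^t}[ E_{a ∼ π'(s_t)}[Q^π_t(s_t, a)] − E_{a ∼ π(s_t)}[Q^π_t(s_t, a)] ], where Q^π_t(s,a) is the expected sum of f along a rollout of π starting from (s,a) at time t, and ρ_{π'}^t is the state visitation distribution of π' at time t. -/
open scoped BigOperators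

/-- A finite-horizon Markov decision process (dynamics part): transition kernel and
initial state distribution. -/
structure FinMDP (S A : Type) where
  trans : S → A → PMF S
  init : PMF S

/-- A nonstationary (time-indexed) stochastic policy. -/
abbrev Policy (S A : Type) := ℕ → S → PMF A

namespace FinMDP

variable {S A : Type}

/-- One step of the state-action occupancy dynamics under policy `π` at time `t`. -/
noncomputable def step (M : FinMDP S A) (π : Policy S A) (t : ℕ) (p : PMF (S × A)) :
    PMF (S × A) :=
  p.bind fun sa => (M.trans sa.1 sa.2).bind fun s' => (π t s').map fun a' => (s', a')

/-- The state-action visitation distribution of policy `π` at time `t`. -/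
noncomputable def visit (M : FinMDP S A) (π : Policy S A) : ℕ → PMF (S × A)
  | 0 => M.init.bind fun s => (π 0 s).map fun a => (s, a)
  | t + 1 => M.step π (t + 1) (M.visit π t)

/-- Expectation of a reward `f` under a state-action distribution. -/
noncomputable def expF [Fintype S] [Fintype A] (p : PMF (S × A)) (f : S → A → ℝ) : ℝ :=
  ∑ sa : S × A, (p sa).toReal * f sa.1 sa.2

/-- Value of policy `π` under reward `f` over horizon `T`. -/
noncomputable def J [Fintype S] [Fintype A] (M : FinMDP S A) (π : Policy S A)
    (f : S → A → ℝ) (T : ℕ) : ℝ :=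
  ∑ t ∈ Finset.range T, expF (M.visit π t) f

/-- State-action visitation distribution of a rollout of `π` started at `sa` at time `t`,
after `k` further steps. -/
noncomputable def visitFrom (M : FinMDP S A) (π : Policy S A) (t : ℕ) (sa : S × A) :
    ℕ → PMF (S × A)
  | 0 => PMF.pure sa
  | k + 1 => M.step π (t + k + 1) (M.visitFrom π t sa k)

/-- `Q` value: expected cumulative `f` of rolling out `π` from `(s, a)` at time `t`
until the end of horizon `T`. -/
noncomputable def Q [Fintype S] [Fintype A] (M : FinMDP S A) (π : Policy S A)
    (f : S → A → ℝ) (T t : ℕ) (s : S) (a : A) : ℝ :=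
  ∑ k ∈ Finset.range (T - t), expF (M.visitFrom π t (s, a) k) f

end FinMDP

namespace PDLAux

open FinMDP

variable {S A : Type} [Fintype S] [Fintype A]

lemma expF_bind {α : Type} [Fintype α] (p : PMF α) (g : α → PMF (S × A)) (f : S → A → ℝ) :
    expF (p.bind g) f = ∑ x : α, (p x).toReal * expF (g x) f := by
  unfold expF
  have h : ∀ sa : S × A, ((p.bind g) sa).toReal
      = ∑ x : α, (p x).toReal * ((g x) sa).toReal := by
    intro sa
    rw [PMF.bind_apply, tsum_fintype, ENNReal.toReal_sum]
    · exact Finset.sum_congr rfl fun x _ => ENNReal.toReal_mul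
    · intro x _
      exact ENNReal.mul_ne_top (PMF.apply_ne_top _ _) (PMF.apply_ne_top _ _)
  simp_rw [h, Finset.sum_mul]
  rw [Finset.sum_comm]
  refine Finset.sum_congr rfl fun x _ => ?_
  rw [Finset.mul_sum]
  exact Finset.sum_congr rfl fun sa _ => by ring

lemma expF_pure (sa : S × A) (f : S → A → ℝ) : expF (PMF.pure sa) f = f sa.1 sa.2 := by
  unfold expF
  simp only [PMF.pure_apply, apply_ite ENNReal.toReal, ENNReal.toReal_one,
    ENNReal.toReal_zero, ite_mul, one_mul, zero_mul]
  rw [Finset.sum_eq_single sa]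
  · simp
  · intro b _ hb; simp [hb]
  · intro h; exact absurd (Finset.mem_univ sa) h

lemma expF_map (r : PMF A) (s : S) (f : S → A → ℝ) :
    expF (r.map fun a => (s, a)) f = ∑ a : A, (r a).toReal * f s a := by
  rw [show (r.map fun a => (s, a)) = r.bind (fun a => PMF.pure (s, a)) from
    (PMF.bind_pure_comp _ _).symm, expF_bind]
  simp [expF_pure]

lemma expF_prod (μ : PMF S) (q : S → PMF A) (g : S → A → ℝ) :
    expF (μ.bind fun s => (q s).map fun a => (s, a)) g
      = ∑ s : S, (μ s).toReal * ∑ a : A, (q s a).toReal * g s a := by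
  rw [expF_bind]
  simp_rw [expF_map]

lemma map_fst (μ : PMF S) (q : S → PMF A) :
    ((μ.bind fun s => (q s).map fun a => (s, a)).map Prod.fst) = μ := by
  rw [PMF.map_bind]
  simp only [PMF.map_comp, Function.comp_def]
  have : ∀ s, ((q s).map fun a => s) = PMF.pure s := fun s => PMF.map_const _ _
  simp_rw [this, PMF.bind_pure]


noncomputable def stepsFrom (M : FinMDP S A) (π : Policy S A) (t : ℕ) (p : PMF (S × A)) :
    ℕ → PMF (S × A)
  | 0 => p
  | k + 1 => M.step π (t + k + 1) (stepsFrom M π t p k)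

omit [Fintype S] [Fintype A] in
lemma step_bind {α : Type} (M : FinMDP S A) (π : Policy S A) (u : ℕ) (p : PMF α)
    (h : α → PMF (S × A)) :
    M.step π u (p.bind h) = p.bind fun x => M.step π u (h x) := by
  simp [step, PMF.bind_bind]

omit [Fintype S] [Fintype A] in
lemma stepsFrom_bind {α : Type} (M : FinMDP S A) (π : Policy S A) (t : ℕ) (p : PMF α)
    (g : α → PMF (S × A)) (k : ℕ) :
    stepsFrom M π t (p.bind g) k = p.bind fun x => stepsFrom M π t (g x) k := by
  induction k with
  | zero => rfl
  | succ k ih => rw [stepsFrom, ih, step_bind]; rfl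

omit [Fintype S] [Fintype A] in
lemma visitFrom_eq (M : FinMDP S A) (π : Policy S A) (t : ℕ) (sa : S × A) (k : ℕ) :
    M.visitFrom π t sa k = stepsFrom M π t (PMF.pure sa) k := by
  induction k with
  | zero => rfl
  | succ k ih => rw [visitFrom, ih]; rfl

omit [Fintype S] [Fintype A] in
lemma stepsFrom_eq_bind (M : FinMDP S A) (π : Policy S A) (t : ℕ) (p : PMF (S × A)) (k : ℕ) :
    stepsFrom M π t p k = p.bind fun sa => M.visitFrom π t sa k := by
  conv_lhs => rw [← PMF.bind_pure p]
  rw [stepsFrom_bind]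
  simp_rw [visitFrom_eq]

omit [Fintype S] [Fintype A] in
lemma stepsFrom_shift (M : FinMDP S A) (π : Policy S A) (t : ℕ) (p : PMF (S × A)) (k : ℕ) :
    stepsFrom M π t p (k + 1) = stepsFrom M π (t + 1) (M.step π (t + 1) p) k := by
  induction k with
  | zero => simp [stepsFrom]
  | succ k ih =>
    show M.step π (t + (k + 1) + 1) (stepsFrom M π t p (k + 1))
      = M.step π (t + 1 + k + 1) (stepsFrom M π (t + 1) (M.step π (t + 1) p) k)
    rw [ih, show t + (k + 1) + 1 = t + 1 + k + 1 by omega]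

noncomputable def Val (M : FinMDP S A) (π : Policy S A) (f : S → A → ℝ) (T t : ℕ)
    (p : PMF (S × A)) : ℝ :=
  ∑ k ∈ Finset.range (T - t), expF (stepsFrom M π t p k) f

lemma Val_eq_expQ (M : FinMDP S A) (π : Policy S A) (f : S → A → ℝ) (T t : ℕ)
    (p : PMF (S × A)) :
    Val M π f T t p = expF p (fun s a => M.Q π f T t s a) := by
  unfold Val
  simp_rw [stepsFrom_eq_bind, expF_bind]
  rw [Finset.sum_comm]
  unfold expF Q
  refine Finset.sum_congr rfl fun sa _ => ?_
  rw [Finset.mul_sum]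
  simp [expF]

lemma Val_succ (M : FinMDP S A) (π : Policy S A) (f : S → A → ℝ) (T t : ℕ)
    (p : PMF (S × A)) (h : t < T) :
    Val M π f T t p = expF p f + Val M π f T (t + 1) (M.step π (t + 1) p) := by
  unfold Val
  rw [show T - t = (T - (t + 1)) + 1 by omega, Finset.sum_range_succ', add_comm]
  congr 1
  exact Finset.sum_congr rfl fun k _ => by rw [stepsFrom_shift]

omit [Fintype S] [Fintype A] in
lemma Val_top [Fintype S] [Fintype A] (M : FinMDP S A) (π : Policy S A) (f : S → A → ℝ)
    (T : ℕ) (p : PMF (S × A)) : Val M π f T T p = 0 := by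
  simp [Val]

noncomputable def stateDist (M : FinMDP S A) (π' : Policy S A) : ℕ → PMF S
  | 0 => M.init
  | t + 1 => (M.visit π' t).bind fun sa => M.trans sa.1 sa.2

omit [Fintype S] [Fintype A] in
lemma visit_form (M : FinMDP S A) (π' : Policy S A) (t : ℕ) :
    M.visit π' t = (stateDist M π' t).bind fun s => (π' t s).map fun a => (s, a) := by
  cases t with
  | zero => rfl
  | succ t =>
    show M.step π' (t + 1) (M.visit π' t) = _
    simp [step, stateDist, PMF.bind_bind]

noncomputable def Dt (M : FinMDP S A) (π π' : Policy S A) (t : ℕ) : PMF (S × A) :=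
  (stateDist M π' t).bind fun s => (π t s).map fun a => (s, a)

omit [Fintype S] [Fintype A] in
lemma step_visit_eq_Dt (M : FinMDP S A) (π π' : Policy S A) (t : ℕ) :
    M.step π (t + 1) (M.visit π' t) = Dt M π π' (t + 1) := by
  simp [step, Dt, stateDist, PMF.bind_bind]

noncomputable def Cfun (M : FinMDP S A) (π π' : Policy S A) (f : S → A → ℝ) (T t : ℕ) : ℝ :=
  Val M π f T t (Dt M π π' t)

omit [Fintype S] [Fintype A] in
lemma stepsFrom_zero_visit [Fintype S] [Fintype A] (M : FinMDP S A) (π : Policy S A) (k : ℕ) :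
    stepsFrom M π 0 (M.visit π 0) k = M.visit π k := by
  induction k with
  | zero => rfl
  | succ k ih =>
    show M.step π (0 + k + 1) (stepsFrom M π 0 (M.visit π 0) k) = _
    rw [show 0 + k + 1 = k + 1 by omega, ih]
    rfl

lemma C_zero (M : FinMDP S A) (π π' : Policy S A) (f : S → A → ℝ) (T : ℕ) :
    Cfun M π π' f T 0 = M.J π f T := by
  have hD : Dt M π π' 0 = M.visit π 0 := rfl
  unfold Cfun J Val
  rw [hD, Nat.sub_zero]
  exact Finset.sum_congr rfl fun k _ => by rw [stepsFrom_zero_visit]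

lemma C_top (M : FinMDP S A) (π π' : Policy S A) (f : S → A → ℝ) (T : ℕ) :
    Cfun M π π' f T T = 0 :=
  Val_top M π f T _

lemma B_recursion (M : FinMDP S A) (π π' : Policy S A) (f : S → A → ℝ) (T t : ℕ)
    (h : t < T) :
    expF (M.visit π' t) (fun s a => M.Q π f T t s a)
      = expF (M.visit π' t) f + Cfun M π π' f T (t + 1) := by
  rw [← Val_eq_expQ, Val_succ M π f T t _ h, step_visit_eq_Dt]
  rfl

end PDLAux

open PDLAux


open FinMDP in
/-- **Performance Difference Lemma (finite-horizon version).** For any two nonstationary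
policies `π` and `π'`, the value gap decomposes as the sum over timesteps of the expected
advantage of `π'` over `π` on `π'`'s state visitation distribution, where advantages are
measured by the `Q`-function of `π`. -/
theorem performance_difference_lemma {S A : Type} [Fintype S] [Fintype A]
    (M : FinMDP S A) (π π' : Policy S A) (f : S → A → ℝ) (T : ℕ) :
    M.J π' f T - M.J π f T =
      ∑ t ∈ Finset.range T, ∑ s : S, (((M.visit π' t).map Prod.fst) s).toReal *
        ((∑ a : A, ((π' t s) a).toReal * M.Q π f T t s a) -
         (∑ a : A, ((π t s) a).toReal * M.Q π f T t s a)) := by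
  have hmap : ∀ t, ((M.visit π' t).map Prod.fst) = stateDist M π' t := by
    intro t; rw [visit_form]; exact map_fst _ _
  have hB : ∀ t, expF (M.visit π' t) (fun s a => M.Q π f T t s a)
      = ∑ s : S, (stateDist M π' t s).toReal * ∑ a : A, (π' t s a).toReal * M.Q π f T t s a := by
    intro t; rw [visit_form, expF_prod]
  have hC : ∀ t, Cfun M π π' f T t
      = ∑ s : S, (stateDist M π' t s).toReal * ∑ a : A, (π t s a).toReal * M.Q π f T t s a := by
    intro t; rw [Cfun, Val_eq_expQ, Dt, expF_prod]
  simp_rw [hmap, mul_sub, Finset.sum_sub_distrib, ← hB, ← hC]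
  have key : ∀ t ∈ Finset.range T,
      expF (M.visit π' t) (fun s a => M.Q π f T t s a) - Cfun M π π' f T t
        = expF (M.visit π' t) f + (Cfun M π π' f T (t + 1) - Cfun M π π' f T t) := by
    intro t ht
    rw [B_recursion M π π' f T t (Finset.mem_range.mp ht)]; ring
  rw [← Finset.sum_sub_distrib, Finset.sum_congr rfl key, Finset.sum_add_distrib,
    Finset.sum_range_sub (fun t => Cfun M π π' f T t), C_top, C_zero]
  simp only [J]
  ring
end

section
/- In the Dante MDP with horizon T, if policies π_2,...,π_T always stay in the same row except π_2 which moves down with probability εT, then: the behavioral-cloning choice for π_1 (always go straight) yields performance gap J(π_E) − J({π_BC, π_2,...,π_T}) = εT(T−1), while the MMDP choice for π_1 (go up) yields gap 0. -/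
open scoped BigOperators

namespace Dante

/-- Row reached from row `s` after action `a` (`0` = move up, `1` = stay, `2` = move down),
clamped to the three rows (`0` = top, `2` = bottom). -/
def move (s a : Fin 3) : Fin 3 :=
  ⟨min 2 (if a.val = 0 then s.val - 1 else if a.val = 1 then s.val else s.val + 1), by
    have := Nat.min_le_left 2 (if a.val = 0 then s.val - 1 else if a.val = 1 then s.val
      else s.val + 1)
    omega⟩

/-- The Dante MDP: three rows, deterministic row dynamics, start in the middle row. -/
noncomputable def M : FinMDP (Fin 3) (Fin 3) where
  trans s a := PMF.pure (move s a)
  init := PMF.pure 1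

/-- Reward `1` for ending the step in one of the top two rows, `0` in the bottom row. -/
noncomputable def r (s a : Fin 3) : ℝ := if (move s a).val ≤ 1 then 1 else 0

/-- The expert always stays (in the middle row). -/
noncomputable def πE : Policy (Fin 3) (Fin 3) := fun _ _ => PMF.pure 1

/-- The fixed future policies `π_2, …, π_T`: `π_2` (time index `1`) moves down with
probability `p` and stays otherwise; all later policies always stay. -/
noncomputable def tail (p : ENNReal) (hp : p ≤ 1) : Policy (Fin 3) (Fin 3) := fun t _ =>
  if t = 1 then (PMF.bernoulli p.toNNReal (by simpa using ENNReal.toNNReal_mono ENNReal.one_ne_top hp)).map (fun b => if b then 2 else 1)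
  else PMF.pure 1

/-- Behavioral cloning's choice for `π_1`: exactly match the expert's action (stay). -/
noncomputable def πBC (p : ENNReal) (hp : p ≤ 1) : Policy (Fin 3) (Fin 3) := fun t s =>
  if t = 0 then PMF.pure 1 else tail p hp t s

/-- MMDP's choice for `π_1`: move up, anticipating the future policies' mistake. -/
noncomputable def πMMDP (p : ENNReal) (hp : p ≤ 1) : Policy (Fin 3) (Fin 3) := fun t s =>
  if t = 0 then PMF.pure 0 else tail p hp t s

end Dante

namespace DanteAux

open Dante

variable (p : ENNReal) (hp : p ≤ 1)

include hp in
lemma hq : p.toNNReal ≤ 1 := by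
  simpa using ENNReal.toNNReal_mono ENNReal.one_ne_top hp

lemma step_pure (π : Policy (Fin 3) (Fin 3)) (t : ℕ) (s a : Fin 3) :
    M.step π t (PMF.pure (s, a)) =
      (π t (move s a)).map (fun a' => (move s a, a')) := by
  simp [FinMDP.step, M, PMF.pure_bind]

lemma step_map (π : Policy (Fin 3) (Fin 3)) (t : ℕ) (g : Bool → Fin 3 × Fin 3) :
    M.step π t ((PMF.bernoulli p.toNNReal (hq p hp)).map g) =
      (PMF.bernoulli p.toNNReal (hq p hp)).bind (fun b =>
        (π t (move (g b).1 (g b).2)).map (fun a' => (move (g b).1 (g b).2, a'))) := by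
  simp only [FinMDP.step, M, PMF.map, PMF.bind_bind, PMF.pure_bind, Function.comp]

lemma expF_pure (sa : Fin 3 × Fin 3) (f : Fin 3 → Fin 3 → ℝ) :
    FinMDP.expF (PMF.pure sa) f = f sa.1 sa.2 := by
  simp [FinMDP.expF, PMF.pure_apply, apply_ite ENNReal.toReal, ite_mul,
    Finset.sum_ite_eq]

lemma map_bool_apply (g : Bool → Fin 3 × Fin 3) (sa : Fin 3 × Fin 3) :
    ((PMF.bernoulli p.toNNReal (hq p hp)).map g) sa =
      (if sa = g false then 1 - p else 0) + (if sa = g true then p else 0) := by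
  have hpf : p ≠ ⊤ := (lt_of_le_of_lt hp ENNReal.one_lt_top).ne
  rw [PMF.map_apply, tsum_bool]
  simp only [PMF.bernoulli_apply, Bool.cond_false, Bool.cond_true, ENNReal.coe_sub,
    ENNReal.coe_one, ENNReal.coe_toNNReal hpf]

lemma expF_map_bool (g : Bool → Fin 3 × Fin 3) (f : Fin 3 → Fin 3 → ℝ) :
    FinMDP.expF ((PMF.bernoulli p.toNNReal (hq p hp)).map g) f =
      (1 - p).toReal * f (g false).1 (g false).2 + p.toReal * f (g true).1 (g true).2 := by
  have hpf : p ≠ ⊤ := (lt_of_le_of_lt hp ENNReal.one_lt_top).ne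
  have h1pf : (1 - p) ≠ ⊤ := by
    exact (lt_of_le_of_lt tsub_le_self ENNReal.one_lt_top).ne
  unfold FinMDP.expF
  simp only [map_bool_apply p hp g]
  have : ∀ sa : Fin 3 × Fin 3,
      ((if sa = g false then 1 - p else 0) + (if sa = g true then p else 0)).toReal *
        f sa.1 sa.2 =
      (if sa = g false then (1 - p).toReal * f sa.1 sa.2 else 0) +
      (if sa = g true then p.toReal * f sa.1 sa.2 else 0) := by
    intro sa
    rw [ENNReal.toReal_add]
    · split_ifs <;> simp [add_mul]
    · split_ifs <;> simp [h1pf]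
    · split_ifs <;> simp [hpf]
  simp only [this, Finset.sum_add_distrib, Finset.sum_ite_eq', Finset.mem_univ, if_true]

lemma visit_πE (t : ℕ) : M.visit πE t = PMF.pure (1, 1) := by
  induction t with
  | zero => simp [FinMDP.visit, M, πE, PMF.pure_bind, PMF.pure_map]
  | succ t ih =>
      rw [FinMDP.visit, ih, step_pure]
      have hm : move 1 1 = 1 := by decide
      simp [hm, πE, PMF.pure_map]

lemma J_πE (T : ℕ) : M.J πE r T = T := by
  unfold FinMDP.J
  have : ∀ t, FinMDP.expF (M.visit πE t) r = 1 := by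
    intro t
    rw [visit_πE, expF_pure]
    norm_num [r, move]
  simp [this]

lemma tail_ne_one (t : ℕ) (ht : t ≠ 1) (s : Fin 3) : tail p hp t s = PMF.pure 1 := by
  simp [tail, ht]

lemma tail_one (s : Fin 3) :
    tail p hp 1 s = (PMF.bernoulli p.toNNReal (hq p hp)).map (fun b => if b then 2 else 1) := by
  simp [tail]

/-! ### BC visits -/

lemma visit_πBC_zero : M.visit (πBC p hp) 0 = PMF.pure (1, 1) := by
  simp [FinMDP.visit, M, πBC, PMF.pure_bind, PMF.pure_map]

lemma visit_πBC_one :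
    M.visit (πBC p hp) 1 =
      (PMF.bernoulli p.toNNReal (hq p hp)).map (fun b => ((1 : Fin 3), if b then 2 else 1)) := by
  rw [FinMDP.visit, visit_πBC_zero, step_pure]
  have hm : move 1 1 = 1 := by decide
  rw [hm]
  show PMF.map _ (πBC p hp 1 1) = _
  rw [show πBC p hp 1 1 = (PMF.bernoulli p.toNNReal (hq p hp)).map (fun b => if b then 2 else 1) by
    simp [πBC, tail]]
  rw [PMF.map_comp]
  rfl

lemma visit_πBC_ge_two (t : ℕ) :
    M.visit (πBC p hp) (t + 2) =
      (PMF.bernoulli p.toNNReal (hq p hp)).map (fun b => ((if b then 2 else (1 : Fin 3)), (1 : Fin 3))) := by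
  induction t with
  | zero =>
      rw [FinMDP.visit, visit_πBC_one, step_map p hp]
      have h2 : ∀ b : Bool, πBC p hp 2 (move (1 : Fin 3) (if b then 2 else 1)) =
          PMF.pure 1 := by
        intro b; simp [πBC, tail]
      simp only [h2, PMF.pure_map]
      have hfun : ∀ b : Bool, (move (1 : Fin 3) (if b = true then 2 else 1), (1 : Fin 3)) =
          ((if b = true then 2 else (1 : Fin 3)), (1 : Fin 3)) := by decide
      simp only [hfun]
      rfl
  | succ t ih =>
      rw [FinMDP.visit, ih, step_map p hp]
      have h2 : ∀ b : Bool, πBC p hp (t + 1 + 2)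
          (move (if b then 2 else (1 : Fin 3)) 1) = PMF.pure 1 := by
        intro b; simp [πBC, tail]
      simp only [h2, PMF.pure_map]
      have hfun : ∀ b : Bool, (move (if b = true then 2 else (1 : Fin 3)) 1, (1 : Fin 3)) =
          ((if b = true then 2 else (1 : Fin 3)), (1 : Fin 3)) := by decide
      simp only [hfun]
      rfl

lemma expF_πBC (t : ℕ) :
    FinMDP.expF (M.visit (πBC p hp) (t + 1)) r = (1 - p).toReal := by
  cases t with
  | zero =>
      rw [visit_πBC_one, expF_map_bool p hp]
      norm_num [r, move]
  | succ t =>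
      rw [visit_πBC_ge_two, expF_map_bool p hp]
      norm_num [r, move]

lemma J_πBC (T : ℕ) (hT : 1 ≤ T) :
    M.J (πBC p hp) r T = 1 + (T - 1 : ℕ) * (1 - p).toReal := by
  obtain ⟨n, rfl⟩ := Nat.exists_eq_add_of_le hT
  unfold FinMDP.J
  rw [add_comm 1 n, Finset.sum_range_succ']
  have h0 : FinMDP.expF (M.visit (πBC p hp) 0) r = 1 := by
    rw [visit_πBC_zero, expF_pure]; norm_num [r, move]
  simp only [expF_πBC p hp, h0]
  simp [Finset.sum_const, add_comm]

/-! ### MMDP visits -/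

lemma visit_πMMDP_zero : M.visit (πMMDP p hp) 0 = PMF.pure (1, 0) := by
  simp [FinMDP.visit, M, πMMDP, PMF.pure_bind, PMF.pure_map]

lemma visit_πMMDP_one :
    M.visit (πMMDP p hp) 1 =
      (PMF.bernoulli p.toNNReal (hq p hp)).map (fun b => ((0 : Fin 3), if b then 2 else 1)) := by
  rw [FinMDP.visit, visit_πMMDP_zero, step_pure]
  have hm : move 1 0 = 0 := by decide
  rw [hm]
  show PMF.map _ (πMMDP p hp 1 0) = _
  rw [show πMMDP p hp 1 0 = (PMF.bernoulli p.toNNReal (hq p hp)).map (fun b => if b then 2 else 1) by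
    simp [πMMDP, tail]]
  rw [PMF.map_comp]
  rfl

lemma visit_πMMDP_ge_two (t : ℕ) :
    M.visit (πMMDP p hp) (t + 2) =
      (PMF.bernoulli p.toNNReal (hq p hp)).map (fun b => ((if b then 1 else (0 : Fin 3)), (1 : Fin 3))) := by
  induction t with
  | zero =>
      rw [FinMDP.visit, visit_πMMDP_one, step_map p hp]
      have h2 : ∀ b : Bool, πMMDP p hp 2 (move (0 : Fin 3) (if b then 2 else 1)) =
          PMF.pure 1 := by
        intro b; simp [πMMDP, tail]
      simp only [h2, PMF.pure_map]
      have hfun : ∀ b : Bool, (move (0 : Fin 3) (if b = true then 2 else 1), (1 : Fin 3)) =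
          ((if b = true then 1 else (0 : Fin 3)), (1 : Fin 3)) := by decide
      simp only [hfun]
      rfl
  | succ t ih =>
      rw [FinMDP.visit, ih, step_map p hp]
      have h2 : ∀ b : Bool, πMMDP p hp (t + 1 + 2)
          (move (if b then 1 else (0 : Fin 3)) 1) = PMF.pure 1 := by
        intro b; simp [πMMDP, tail]
      simp only [h2, PMF.pure_map]
      have hfun : ∀ b : Bool, (move (if b = true then 1 else (0 : Fin 3)) 1, (1 : Fin 3)) =
          ((if b = true then 1 else (0 : Fin 3)), (1 : Fin 3)) := by decide
      simp only [hfun]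
      rfl

include hp in
lemma toReal_add_one : (1 - p).toReal + p.toReal = 1 := by
  have hpf : p ≠ ⊤ := (lt_of_le_of_lt hp ENNReal.one_lt_top).ne
  rw [← ENNReal.toReal_add (by exact (lt_of_le_of_lt tsub_le_self ENNReal.one_lt_top).ne) hpf,
    tsub_add_cancel_of_le hp, ENNReal.toReal_one]

lemma expF_πMMDP (t : ℕ) :
    FinMDP.expF (M.visit (πMMDP p hp) t) r = 1 := by
  match t with
  | 0 =>
      rw [visit_πMMDP_zero, expF_pure]; norm_num [r, move]
  | 1 =>
      rw [visit_πMMDP_one, expF_map_bool p hp]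
      have := toReal_add_one p hp
      norm_num [r, move]
      linarith
  | (t + 2) =>
      rw [visit_πMMDP_ge_two, expF_map_bool p hp]
      have := toReal_add_one p hp
      norm_num [r, move]
      linarith

lemma J_πMMDP (T : ℕ) : M.J (πMMDP p hp) r T = T := by
  unfold FinMDP.J
  simp [expF_πMMDP p hp]

end DanteAux

open Dante in
/-- **MMDP vs. behavioral cloning in the Dante MDP.** With the future policies
`π_2, …, π_T` fixed (where `π_2` moves down with probability `ε T`), behavioral cloning's
choice for `π_1` (stay, exactly matching the expert) suffers performance gap
`J(π_E) − J({π_BC, π_{2:T}}) = ε T (T − 1)`, whereas MMDP's choice (move up) achieves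
gap `J(π_E) − J({π_MMDP, π_{2:T}}) = 0`. -/
theorem dante_bc_vs_mmdp (T : ℕ) (hT : 1 ≤ T) (ε : ℝ) (hε : 0 ≤ ε)
    (hεT : ε * T ≤ 1) :
    ∀ hp : ENNReal.ofReal (ε * T) ≤ 1,
      M.J πE r T - M.J (πBC (ENNReal.ofReal (ε * T)) hp) r T = ε * T * ((T : ℝ) - 1) ∧
      M.J πE r T - M.J (πMMDP (ENNReal.ofReal (ε * T)) hp) r T = 0 := by
  intro hp
  have hεT0 : 0 ≤ ε * T := by positivity
  have htr : (1 - ENNReal.ofReal (ε * T)).toReal = 1 - ε * T := by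
    rw [← ENNReal.ofReal_one, ← ENNReal.ofReal_sub _ hεT0,
      ENNReal.toReal_ofReal (by linarith)]
  constructor
  · rw [DanteAux.J_πE, DanteAux.J_πBC _ hp T hT, htr]
    have hT1 : (T : ℝ) ≥ 1 := by exact_mod_cast hT
    rw [Nat.cast_sub hT]
    push_cast
    ring
  · rw [DanteAux.J_πE, DanteAux.J_πMMDP _ hp T]
    ring
end
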